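/- For every real number ν and each j ∈ {1, 2, 3}: j!·Σ_{ℓ=0}^{2} a_ℓ(ν)·C(ℓ+j, j)·Σ_{k=0}^{j} [ (−j)_k·(−νj)_k / ((−ℓ−j)_k·k!) ]·(−1)^k·(ν−1)^{j−k} = Q_{1,j}(ν), where a_0(ν) = ν(2+ν)/12, a_1(ν) = −ν(2+3ν)/12, a_2(ν) = ν²/6, and Q_{1,1}(ν) = ν(ν−1)(ν−2)/12, Q_{1,2}(ν) = (1/3)(3ν²−6ν+2)·ν(ν−1), Q_{1,3}(ν) = (3/4)(17ν³−39ν²+24ν−4)·ν(ν−1). -/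
import Mathlib


/-- The Pochhammer symbol `(y)_k = y(y+1)⋯(y+k−1)` on `ℝ`. -/
noncomputable def realPoch (y : ℝ) (k : ℕ) : ℝ := (ascPochhammer ℝ k).eval y

/-- The genus-1 coefficients `a_ℓ(ν)`. -/
noncomputable def genus1a : ℕ → ℝ → ℝ
  | 0, ν => ν * (2 + ν) / 12
  | 1, ν => -ν * (2 + 3 * ν) / 12
  | 2, ν => ν ^ 2 / 6
  | _, _ => 0

/-- The genus-1 two-legged count polynomials `Q_{1,j}(ν)`. -/
noncomputable def genus1Q : ℕ → ℝ → ℝ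
  | 1, ν => ν * (ν - 1) * (ν - 2) / 12
  | 2, ν => 1 / 3 * (3 * ν ^ 2 - 6 * ν + 2) * (ν * (ν - 1))
  | 3, ν => 3 / 4 * (17 * ν ^ 3 - 39 * ν ^ 2 + 24 * ν - 4) * (ν * (ν - 1))
  | _, _ => 0

/-- For every real `ν` and each `j ∈ {1,2,3}`:
`j!·Σ_{ℓ=0}^{2} a_ℓ(ν)·C(ℓ+j,j)·Σ_{k=0}^{j} [(−j)_k(−νj)_k/((−ℓ−j)_k·k!)]·(−1)^k·(ν−1)^{j−k}
 = Q_{1,j}(ν)`, pinning down the genus-1 coefficients of the hypergeometric representation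
of the two-legged counts `𝒩₁(2ν,j)`. -/
theorem genus1_hypergeometric_identity :
    ∀ (ν : ℝ) (j : ℕ), j = 1 ∨ j = 2 ∨ j = 3 →
      (Nat.factorial j : ℝ) *
        ∑ ℓ ∈ Finset.range 3, genus1a ℓ ν * ((ℓ + j).choose j : ℝ) *
          ∑ k ∈ Finset.range (j + 1),
            realPoch (-(j : ℝ)) k * realPoch (-(ν * j)) k /
                (realPoch (-(ℓ : ℝ) - (j : ℝ)) k * (Nat.factorial k : ℝ)) *
              (-1 : ℝ) ^ k * (ν - 1) ^ (j - k)
      = genus1Q j ν := by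
  rintro ν j (rfl | rfl | rfl) <;>
  · simp only [Finset.sum_range_succ, Finset.sum_range_zero, realPoch,
      ascPochhammer_succ_eval, ascPochhammer_zero, Polynomial.eval_one, genus1a, genus1Q]
    norm_num [Nat.factorial, Nat.choose]
    ring
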